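/- Let f:[0,1]²→[0,1] have finite spectrum of rank r, be L-Lipschitz in its first argument, and define for t ≥ 0 the distance d(x,y) = Σ_{k=1}^r λ_k^{2(t+1)}(q_k(x) − q_k(y))², where |λ_1| = max_k |λ_k|. Let θ_1,…,θ_n be i.i.d. uniform on [0,1], and fix δ ∈ (0,1) and η' ∈ (0, |λ_1|^{2t}L²). Then with probability at least 1 − n·exp(−δ²(n−1)√(η') / (2|λ_1|^t L)), for every u ∈ [n]: (1/(n−1)) Σ_{a ∈ [n], a≠u} 1{d(θ_u,θ_a) ≤ η'} ≥ (1−δ)√(η') / (|λ_1|^t L). -/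

import Mathlib

open MeasureTheory ProbabilityTheory
open scoped Classical

open Function
open scoped ENNReal

lemma aux_exp_poly {t : ℝ} (ht : 0 ≤ t) : 1 + t + t^2/2 + t^3/6 ≤ Real.exp t := by
  have h := Real.sum_le_exp_of_nonneg ht 4
  simp [Finset.sum_range_succ, Nat.factorial] at h
  nlinarith [h]

lemma aux_log_ineq {x : ℝ} (h0 : 0 < x) (h1 : x ≤ 1) : (x - 1/x)/2 ≤ Real.log x := by
  set y := 1/x with hy
  have hxy : x * y = 1 := by rw [hy]; field_simp
  have hy1 : 1 ≤ y := by rw [hy]; exact (one_le_div h0).mpr h1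
  have ht : 0 ≤ y - x := by linarith
  have h := aux_exp_poly ht
  have key : y^2 ≤ Real.exp (y - x) := by
    refine le_trans ?_ h
    nlinarith [sq_nonneg (1-x), sq_nonneg (y-x), mul_pos h0 h0, sq_nonneg (y*(1-x)),
      mul_nonneg (mul_nonneg ht ht) ht, sq_nonneg (y*(1-x)^2), sq_nonneg (x*y - 1),
      mul_nonneg (mul_nonneg (by linarith : (0:ℝ) ≤ y) (by linarith : (0:ℝ) ≤ y)) (sq_nonneg (1-x)), sq_nonneg y]
  have hlog : Real.log (y^2) ≤ y - x := by
    calc Real.log (y^2) ≤ Real.log (Real.exp (y - x)) :=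
          Real.log_le_log (by positivity) key
    _ = y - x := Real.log_exp _
  rw [Real.log_pow] at hlog
  have hylog : Real.log y = - Real.log x := by
    rw [hy, Real.log_div one_ne_zero h0.ne', Real.log_one]; ring
  rw [hylog] at hlog
  push_cast at hlog
  linarith

/-- the Chernoff exponent inequality -/
lemma aux_chernoff_exp {δ : ℝ} (h0 : 0 < δ) (h1 : δ < 1) :
    δ^2/2 ≤ δ + (1-δ) * Real.log (1-δ) := by
  have hx0 : (0:ℝ) < 1 - δ := by linarith
  have h := aux_log_ineq hx0 (by linarith)
  have h2 : (1-δ) * ((1-δ) - 1/(1-δ))/2 ≤ (1-δ) * Real.log (1-δ) := by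
    rw [mul_div_assoc] at *
    exact mul_le_mul_of_nonneg_left h hx0.le
  have h3 : (1-δ) * (1/(1-δ)) = 1 := by field_simp
  nlinarith [h2]

noncomputable def nu : Measure ℝ := volume.restrict (Set.Icc (0:ℝ) 1)

instance : IsProbabilityMeasure nu := by
  constructor
  rw [nu, Measure.restrict_apply MeasurableSet.univ, Set.univ_inter, Real.volume_Icc]
  norm_num

lemma aux_interval {ε y : ℝ} (hε0 : 0 < ε) (hε1 : ε ≤ 1) (hy : y ∈ Set.Icc (0:ℝ) 1) :
    ENNReal.ofReal ε ≤ (volume.restrict (Set.Icc (0:ℝ) 1)) {z | |y - z| ≤ ε} := by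
  obtain ⟨hy0, hy1⟩ := hy
  have hset : {z : ℝ | |y - z| ≤ ε} = Set.Icc (y - ε) (y + ε) := by
    ext z
    simp only [Set.mem_setOf_eq, Set.mem_Icc, abs_sub_le_iff]
    constructor <;> rintro ⟨h1, h2⟩ <;> constructor <;> linarith
  rw [hset, Measure.restrict_apply measurableSet_Icc, Set.Icc_inter_Icc, Real.volume_Icc]
  apply ENNReal.ofReal_le_ofReal
  rcases le_total (y + ε) 1 with h | h
  · have h1 : (y + ε) ⊓ 1 = y + ε := min_eq_left h
    have h2 : (y - ε) ⊔ 0 ≤ y := sup_le (by linarith) hy0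
    rw [h1]; linarith
  · have h1 : (y + ε) ⊓ 1 = 1 := min_eq_right h
    have h2 : (y - ε) ⊔ 0 ≤ 1 - ε := sup_le (by linarith) (by linarith)
    rw [h1]; linarith

lemma aux_mgf {ε δ y : ℝ} (hε0 : 0 < ε) (hε1 : ε ≤ 1) (hδ0 : 0 < δ) (hδ1 : δ < 1)
    (hy : y ∈ Set.Icc (0:ℝ) 1) :
    ∫⁻ z, ENNReal.ofReal (Real.exp (Real.log (1-δ) * (if |y - z| ≤ ε then (1:ℝ) else 0)))
        ∂(volume.restrict (Set.Icc (0:ℝ) 1))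
      ≤ ENNReal.ofReal (Real.exp (-(δ*ε))) := by
  set ν := volume.restrict (Set.Icc (0:ℝ) 1) with hν
  have hprob : IsProbabilityMeasure ν := by
    constructor
    rw [hν, Measure.restrict_apply MeasurableSet.univ, Set.univ_inter, Real.volume_Icc]
    norm_num
  set A := {z : ℝ | |y - z| ≤ ε} with hA
  have hAmeas : MeasurableSet A := by
    have : A = Set.Icc (y - ε) (y + ε) := by
      ext z; simp only [hA, Set.mem_setOf_eq, Set.mem_Icc, abs_sub_le_iff]
      constructor <;> rintro ⟨h1, h2⟩ <;> constructor <;> linarith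
    rw [this]; exact measurableSet_Icc
  have hfun : ∀ z, ENNReal.ofReal (Real.exp (Real.log (1-δ) * (if |y - z| ≤ ε then (1:ℝ) else 0)))
      = A.indicator (fun _ => ENNReal.ofReal (1 - δ)) z + Aᶜ.indicator (fun _ => 1) z := by
    intro z
    by_cases h : |y - z| ≤ ε
    · have hz : z ∈ A := h
      simp [h, Set.indicator_of_mem hz, Set.indicator_of_notMem (by simpa using hz : z ∉ Aᶜ),
        Real.exp_log (by linarith : (0:ℝ) < 1 - δ)]
    · have hz : z ∉ A := h
      simp [h, Set.indicator_of_notMem hz, Set.indicator_of_mem (by simpa using hz : z ∈ Aᶜ)]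
  calc ∫⁻ z, ENNReal.ofReal (Real.exp (Real.log (1-δ) * (if |y - z| ≤ ε then (1:ℝ) else 0))) ∂ν
      = ∫⁻ z, (A.indicator (fun _ => ENNReal.ofReal (1 - δ)) z + Aᶜ.indicator (fun _ => 1) z) ∂ν := by
        simp_rw [hfun]
    _ = ENNReal.ofReal (1-δ) * ν A + 1 * ν Aᶜ := by
        rw [lintegral_add_left ((measurable_const).indicator hAmeas)]
        rw [lintegral_indicator hAmeas, lintegral_indicator hAmeas.compl]
        simp
    _ ≤ ENNReal.ofReal (Real.exp (-(δ*ε))) := by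
        have hApos : ENNReal.ofReal ε ≤ ν A := aux_interval hε0 hε1 hy
        have hcompl : ν Aᶜ = 1 - ν A := prob_compl_eq_one_sub hAmeas
        have hA1 : ν A ≤ 1 := prob_le_one
        have hAfin : ν A ≠ ⊤ := (hA1.trans_lt ENNReal.one_lt_top).ne
        set p := (ν A).toReal with hp
        have hpε : ε ≤ p := by
          have := ENNReal.toReal_mono hAfin hApos
          rwa [ENNReal.toReal_ofReal hε0.le] at this
        have hp1 : p ≤ 1 := by
          have := ENNReal.toReal_mono (by simp) hA1
          simpa using this
        have hνA : ν A = ENNReal.ofReal p := (ENNReal.ofReal_toReal hAfin).symm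
        rw [hcompl, hνA, one_mul,
          show (1:ℝ≥0∞) = ENNReal.ofReal 1 by simp,
          ← ENNReal.ofReal_sub 1 (ENNReal.toReal_nonneg), ← ENNReal.ofReal_mul (by linarith),
          ← ENNReal.ofReal_add (by nlinarith) (by linarith)]
        apply ENNReal.ofReal_le_ofReal
        have : (1-δ)*p + (1-p) = 1 - δ*p := by ring
        rw [this]
        have h1 : 1 - δ*p ≤ 1 - δ*ε := by nlinarith
        have h2 : 1 - δ*ε ≤ Real.exp (-(δ*ε)) := by
          have := Real.add_one_le_exp (-(δ*ε)); linarith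
        linarith

section LM
variable {n : ℕ} {ν : Measure ℝ} [IsProbabilityMeasure ν]

lemma aux_meas_pair {g : ℝ → ℝ → ℝ≥0∞} (hg : Measurable (Function.uncurry g))
    {α : Type*} [MeasurableSpace α] {p q : α → ℝ} (hp : Measurable p) (hq : Measurable q) :
    Measurable (fun x => g (p x) (q x)) := by
  have := hg.comp (hp.prodMk hq)
  exact this

lemma aux_prod_meas {g : ℝ → ℝ → ℝ≥0∞} (hg : Measurable (Function.uncurry g))
    (u : Fin n) (A : Finset (Fin n)) :
    Measurable (fun x : Fin n → ℝ => ∏ a ∈ A, g (x u) (x a)) := by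
  apply Finset.measurable_prod
  intro a _
  exact aux_meas_pair hg (measurable_pi_apply u) (measurable_pi_apply a)

lemma aux_lmarginal_prod {g : ℝ → ℝ → ℝ≥0∞} (hg : Measurable (Function.uncurry g))
    (u : Fin n) (A : Finset (Fin n)) (hu : u ∉ A) (x : Fin n → ℝ) :
    (∫⋯∫⁻_A, (fun x => ∏ a ∈ A, g (x u) (x a)) ∂(fun _ => ν)) x
      = ∏ a ∈ A, ∫⁻ z, g (x u) z ∂ν := by
  classical
  induction A using Finset.induction_on generalizing x with
  | empty => simp [lmarginal_empty]
  | @insert b s hb ih =>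
    have hus : u ∉ s := fun h => hu (Finset.mem_insert_of_mem h)
    have hub : u ≠ b := fun h => hu (h ▸ Finset.mem_insert_self b s)
    have hF : Measurable (fun x : Fin n → ℝ => ∏ a ∈ insert b s, g (x u) (x a)) :=
      aux_prod_meas hg u _
    rw [lmarginal_insert _ hF hb]
    have hinner : ∀ y : Fin n → ℝ,
        (∫⋯∫⁻_s, (fun x => ∏ a ∈ insert b s, g (x u) (x a)) ∂(fun _ => ν)) y
          = g (y u) (y b) * ∏ a ∈ s, ∫⁻ z, g (y u) z ∂ν := by
      intro y
      have h0 : ∀ w : (i : s) → ℝ, updateFinset y s w u = y u := by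
        intro w; rw [updateFinset]; simp [hus]
      have h0b : ∀ w : (i : s) → ℝ, updateFinset y s w b = y b := by
        intro w; rw [updateFinset]; simp [hb]
      have h1 : (∫⋯∫⁻_s, (fun x => ∏ a ∈ insert b s, g (x u) (x a)) ∂(fun _ => ν)) y
          = ∫⁻ w : (i : s) → ℝ, g (y u) (y b)
              * ∏ a ∈ s, g (y u) (updateFinset y s w a) ∂(Measure.pi fun _ : s => ν) := by
        rw [lmarginal]
        congr 1
        funext w
        rw [Finset.prod_insert hb, h0 w, h0b w]
      rw [h1, lintegral_const_mul]
      · congr 1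
        have h2 := ih hus y
        rw [lmarginal] at h2
        rw [← h2]
        congr 1
        funext w
        rw [h0 w]
      · apply Finset.measurable_prod
        intro a _
        have hq : Measurable (fun w : (i : s) → ℝ => updateFinset y s w a) := by
          have := (measurable_pi_apply a).comp (measurable_updateFinset (x := y) (s := s))
          exact this
        exact aux_meas_pair hg measurable_const hq
    simp_rw [hinner]
    have hup : ∀ z : ℝ, update x b z u = x u := fun z => Function.update_of_ne hub z x
    have hbp : ∀ z : ℝ, update x b z b = z := fun z => Function.update_self b z x
    simp_rw [hup, hbp]
    rw [lintegral_mul_const _ (show Measurable (fun z : ℝ => g (x u) z) from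
        aux_meas_pair hg measurable_const measurable_id),
      Finset.prod_insert hb]
end LM

lemma aux_geom {r : ℕ} (f : ℝ → ℝ → ℝ) (lam : Fin r → ℝ) (q : Fin r → ℝ → ℝ)
    (hrange : ∀ x ∈ Set.Icc (0:ℝ) 1, ∀ y ∈ Set.Icc (0:ℝ) 1, f x y ∈ Set.Icc (0:ℝ) 1)
    (hf : ∀ x y, f x y = ∑ k, lam k * q k x * q k y)
    (hmeas : ∀ k, Measurable (q k))
    (hbdd : ∀ k, ∃ C : ℝ, ∀ y ∈ Set.Icc (0:ℝ) 1, |q k y| ≤ C)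
    (hnorm : ∀ k, ∫ y in Set.Icc (0:ℝ) 1, (q k y) ^ 2 = 1)
    (horth : ∀ k l, k ≠ l → ∫ y in Set.Icc (0:ℝ) 1, q k y * q l y = 0)
    (L : ℝ) (hL : 0 < L)
    (hLip : ∀ x ∈ Set.Icc (0:ℝ) 1, ∀ y ∈ Set.Icc (0:ℝ) 1, ∀ z ∈ Set.Icc (0:ℝ) 1,
        |f x z - f y z| ≤ L * |x - y|)
    {x y : ℝ} (hx : x ∈ Set.Icc (0:ℝ) 1) (hy : y ∈ Set.Icc (0:ℝ) 1) :
    ∑ k, (lam k)^2 * (q k x - q k y)^2 ≤ L^2 * (x - y)^2 := by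
  classical
  set c : Fin r → ℝ := fun k => lam k * (q k x - q k y) with hc
  -- choose nonneg bounds
  have hbdd' : ∀ k, ∃ C : ℝ, 0 ≤ C ∧ ∀ z ∈ Set.Icc (0:ℝ) 1, |q k z| ≤ C := by
    intro k
    obtain ⟨C, hC⟩ := hbdd k
    exact ⟨C, le_trans (abs_nonneg _) (hC 0 (by norm_num)), hC⟩
  choose C hC0 hCb using hbdd'
  have hint : ∀ k l : Fin r, IntegrableOn (fun z => q k z * q l z) (Set.Icc (0:ℝ) 1) volume := by
    intro k l
    refine Integrable.mono' (integrable_const (C k * C l))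
      ((hmeas k).mul (hmeas l)).aestronglyMeasurable ?_
    refine (ae_restrict_iff' measurableSet_Icc).mpr (Filter.Eventually.of_forall ?_)
    intro z hz
    rw [Real.norm_eq_abs, abs_mul]
    exact mul_le_mul (hCb k z hz) (hCb l z hz) (abs_nonneg _) (hC0 k)
  -- difference expansion
  have hdiff : ∀ z, f x z - f y z = ∑ k, c k * q k z := by
    intro z
    rw [hf x z, hf y z, ← Finset.sum_sub_distrib]
    congr 1; funext k; ring
  -- orthonormal expansion of the square integral
  have hsq : ∫ z in Set.Icc (0:ℝ) 1, (f x z - f y z)^2 = ∑ k, (c k)^2 := by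
    have hexp : ∀ z, (f x z - f y z)^2 = ∑ k, ∑ l, (c k * c l) * (q k z * q l z) := by
      intro z
      rw [hdiff z, sq, Finset.sum_mul_sum]
      congr 1; funext k; congr 1; funext l; ring
    simp_rw [hexp]
    rw [integral_finset_sum]
    · have : ∀ k : Fin r, ∫ z in Set.Icc (0:ℝ) 1, (∑ l, (c k * c l) * (q k z * q l z)) = (c k)^2 := by
        intro k
        rw [integral_finset_sum]
        · have : ∀ l : Fin r, ∫ z in Set.Icc (0:ℝ) 1, (c k * c l) * (q k z * q l z)
              = (c k * c l) * ∫ z in Set.Icc (0:ℝ) 1, q k z * q l z := by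
            intro l; exact integral_const_mul _ _
          rw [Finset.sum_congr rfl fun l _ => this l]
          rw [Finset.sum_eq_single k]
          · rw [← sq]
            have : ∫ z in Set.Icc (0:ℝ) 1, q k z * q k z = 1 := by
              have := hnorm k
              simp_rw [sq] at this
              exact this
            rw [this, mul_one]
          · intro l _ hl
            rw [horth k l (Ne.symm hl), mul_zero]
          · intro h; exact absurd (Finset.mem_univ k) h
        · intro l _
          exact (hint k l).const_mul _
      exact Finset.sum_congr rfl fun k _ => this k
    · intro k _
      apply integrable_finset_sum
      intro l _
      exact (hint k l).const_mul _
  -- bound the square integral by Lipschitz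
  have hfm : Measurable (fun z => (f x z - f y z)^2) := by
    have h1 : (fun z => (f x z - f y z)^2) = fun z => (∑ k, c k * q k z)^2 := by
      funext z; rw [hdiff z]
    rw [h1]
    exact (Finset.measurable_sum Finset.univ fun k _ => (hmeas k).const_mul (c k)).pow_const 2
  have hintsq : IntegrableOn (fun z => (f x z - f y z)^2) (Set.Icc (0:ℝ) 1) volume := by
    refine Integrable.mono' (integrable_const 1) hfm.aestronglyMeasurable ?_
    refine (ae_restrict_iff' measurableSet_Icc).mpr (Filter.Eventually.of_forall ?_)
    intro z hz
    have h1 := hrange x hx z hz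
    have h2 := hrange y hy z hz
    rw [Real.norm_eq_abs, abs_of_nonneg (sq_nonneg _)]
    obtain ⟨h1a, h1b⟩ := h1; obtain ⟨h2a, h2b⟩ := h2
    nlinarith
  have hbound : ∫ z in Set.Icc (0:ℝ) 1, (f x z - f y z)^2 ≤ L^2 * (x - y)^2 := by
    calc ∫ z in Set.Icc (0:ℝ) 1, (f x z - f y z)^2
        ≤ ∫ _z in Set.Icc (0:ℝ) 1, L^2 * (x - y)^2 := by
          refine setIntegral_mono_on hintsq (integrable_const _) measurableSet_Icc ?_
          intro z hz
          have h1 := hLip x hx y hy z hz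
          calc (f x z - f y z)^2 = |f x z - f y z|^2 := (sq_abs _).symm
          _ ≤ (L * |x - y|)^2 := by
              apply pow_le_pow_left₀ (abs_nonneg _) h1
          _ = L^2 * (x-y)^2 := by rw [mul_pow, sq_abs]
      _ = L^2 * (x - y)^2 := by
          rw [setIntegral_const]
          rw [Real.volume_real_Icc]
          norm_num
  calc ∑ k, (lam k)^2 * (q k x - q k y)^2 = ∑ k, (c k)^2 := by
        congr 1; funext k; rw [hc]; ring
  _ = ∫ z in Set.Icc (0:ℝ) 1, (f x z - f y z)^2 := hsq.symm
  _ ≤ L^2 * (x - y)^2 := hbound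

lemma aux_chernoff {n : ℕ} (ε δ : ℝ) (hε0 : 0 < ε) (hε1 : ε ≤ 1)
    (hδ0 : 0 < δ) (hδ1 : δ < 1) (u : Fin n) :
    (Measure.pi fun _ : Fin n => nu)
        {x | (∑ a ∈ Finset.univ.erase u, if |x u - x a| ≤ ε then (1:ℝ) else 0)
              < (1-δ) * ((n:ℝ)-1) * ε}
      ≤ ENNReal.ofReal (Real.exp (-(δ^2/2) * ((n:ℝ)-1) * ε)) := by
  have hn1 : 1 ≤ n := Nat.one_le_iff_ne_zero.mpr (by rintro rfl; exact u.elim0)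
  set P := Measure.pi fun _ : Fin n => nu with hP
  set s : ℝ := Real.log (1-δ) with hs
  have hsneg : s < 0 := Real.log_neg (by linarith) (by linarith)
  set A : Finset (Fin n) := Finset.univ.erase u with hA
  have huA : u ∉ A := Finset.notMem_erase u _
  have hcard : (A.card : ℝ) = (n:ℝ) - 1 := by
    rw [hA, Finset.card_erase_of_mem (Finset.mem_univ u), Finset.card_univ, Fintype.card_fin]
    rw [Nat.cast_sub hn1]; norm_num
  set c : ℝ := (1-δ) * ((n:ℝ)-1) * ε with hc
  set S : (Fin n → ℝ) → ℝ := fun x => ∑ a ∈ A, if |x u - x a| ≤ ε then (1:ℝ) else 0 with hS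
  -- the ENNReal-valued per-pair factor
  set g : ℝ → ℝ → ℝ≥0∞ :=
    fun y z => ENNReal.ofReal (Real.exp (s * (if |y - z| ≤ ε then (1:ℝ) else 0))) with hg
  have hsetm : MeasurableSet {p : ℝ × ℝ | |p.1 - p.2| ≤ ε} := by
    have : IsClosed {p : ℝ × ℝ | |p.1 - p.2| ≤ ε} :=
      isClosed_le (by fun_prop) continuous_const
    exact this.measurableSet
  have hgm : Measurable (Function.uncurry g) := by
    apply ENNReal.measurable_ofReal.comp
    apply Real.measurable_exp.comp
    apply Measurable.const_mul
    exact Measurable.ite hsetm measurable_const measurable_const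
  have hSm : Measurable S := by
    apply Finset.measurable_sum
    intro a _
    have hm2 : Measurable (fun x : Fin n → ℝ => (x u, x a)) :=
      (measurable_pi_apply u).prodMk (measurable_pi_apply a)
    have : MeasurableSet {x : Fin n → ℝ | |x u - x a| ≤ ε} := hm2 hsetm
    exact Measurable.ite this measurable_const measurable_const
  have hBadm : MeasurableSet {x : Fin n → ℝ | S x < c} :=
    measurableSet_lt hSm measurable_const
  -- pointwise Markov bound
  have hpt : ∀ x ∈ {x : Fin n → ℝ | S x < c},
      (1:ℝ≥0∞) ≤ ENNReal.ofReal (Real.exp (s * (S x - c))) := by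
    intro x hx
    have hx' : S x < c := hx
    have h1 : 0 ≤ s * (S x - c) := by
      have heq : s * (S x - c) = (-s) * (c - S x) := by ring
      rw [heq]
      exact mul_nonneg (by linarith) (by linarith)
    rw [show (1:ℝ≥0∞) = ENNReal.ofReal (Real.exp 0) by simp]
    exact ENNReal.ofReal_le_ofReal (Real.exp_le_exp.mpr h1)
  have hmeasBig : Measurable (fun x => ENNReal.ofReal (Real.exp (s * (S x - c)))) :=
    ENNReal.measurable_ofReal.comp (Real.measurable_exp.comp ((hSm.sub measurable_const).const_mul s))
  have hfactor : ∀ x : Fin n → ℝ, ENNReal.ofReal (Real.exp (s * (S x - c)))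
      = ENNReal.ofReal (Real.exp (-(s*c))) * ∏ a ∈ A, g (x u) (x a) := by
    intro x
    have h1 : s * (S x - c) = (-(s*c)) + ∑ a ∈ A, s * (if |x u - x a| ≤ ε then (1:ℝ) else 0) := by
      simp only [hS]
      rw [mul_sub, Finset.mul_sum]
      ring
    rw [h1, Real.exp_add, Real.exp_sum, ENNReal.ofReal_mul (Real.exp_nonneg _),
      ENNReal.ofReal_prod_of_nonneg (fun a _ => Real.exp_nonneg _)]
  have hprodbound : ∫⁻ x, ∏ a ∈ A, g (x u) (x a) ∂P
      ≤ ENNReal.ofReal (Real.exp (-(δ*ε))) ^ A.card := by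
    rw [hP, lintegral_eq_lmarginal_univ (fun _ => (0:ℝ))]
    rw [show (Finset.univ : Finset (Fin n)) = insert u A from
      (Finset.insert_erase (Finset.mem_univ u)).symm]
    rw [lmarginal_insert _ (aux_prod_meas hgm u A) huA]
    have hinner : ∀ z : ℝ, (∫⋯∫⁻_A, (fun x => ∏ a ∈ A, g (x u) (x a)) ∂(fun _ => nu))
        (Function.update (fun _ => (0:ℝ)) u z) = ∏ a ∈ A, ∫⁻ w, g z w ∂nu := by
      intro z
      rw [aux_lmarginal_prod hgm u A huA]
      simp [Function.update_self]
    simp_rw [hinner]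
    have hν : nu = volume.restrict (Set.Icc (0:ℝ) 1) := rfl
    calc ∫⁻ z, ∏ a ∈ A, ∫⁻ w, g z w ∂nu ∂nu
        = ∫⁻ z in Set.Icc (0:ℝ) 1, ∏ a ∈ A, ∫⁻ w, g z w ∂nu ∂volume := by rw [hν]
      _ ≤ ∫⁻ _z in Set.Icc (0:ℝ) 1, ENNReal.ofReal (Real.exp (-(δ*ε))) ^ A.card ∂volume := by
          refine setLIntegral_mono' measurableSet_Icc ?_
          intro z hz
          calc ∏ a ∈ A, ∫⁻ w, g z w ∂nu
              ≤ ∏ _a ∈ A, ENNReal.ofReal (Real.exp (-(δ*ε))) := by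
                refine Finset.prod_le_prod' ?_
                intro a _
                exact aux_mgf hε0 hε1 hδ0 hδ1 hz
            _ = ENNReal.ofReal (Real.exp (-(δ*ε))) ^ A.card := Finset.prod_const _
      _ = ENNReal.ofReal (Real.exp (-(δ*ε))) ^ A.card := by
          rw [setLIntegral_const, Real.volume_Icc]
          norm_num
  calc P {x | S x < c}
      = ∫⁻ x in {x | S x < c}, 1 ∂P := (setLIntegral_one _).symm
    _ ≤ ∫⁻ x in {x | S x < c}, ENNReal.ofReal (Real.exp (s * (S x - c))) ∂P :=
        setLIntegral_mono hmeasBig hpt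
    _ ≤ ∫⁻ x, ENNReal.ofReal (Real.exp (s * (S x - c))) ∂P := setLIntegral_le_lintegral _ _
    _ = ENNReal.ofReal (Real.exp (-(s*c))) * ∫⁻ x, ∏ a ∈ A, g (x u) (x a) ∂P := by
        rw [← lintegral_const_mul _ (aux_prod_meas hgm u A)]
        congr 1; funext x; exact hfactor x
    _ ≤ ENNReal.ofReal (Real.exp (-(s*c))) * ENNReal.ofReal (Real.exp (-(δ*ε))) ^ A.card :=
        mul_le_mul_right hprodbound _
    _ ≤ ENNReal.ofReal (Real.exp (-(δ^2/2) * ((n:ℝ)-1) * ε)) := by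
        rw [← ENNReal.ofReal_pow (Real.exp_nonneg _), ← Real.exp_nat_mul,
          ← ENNReal.ofReal_mul (Real.exp_nonneg _), ← Real.exp_add]
        apply ENNReal.ofReal_le_ofReal
        apply Real.exp_le_exp.mpr
        have hK : (0:ℝ) ≤ ((n:ℝ)-1) * ε := by
          have : (1:ℝ) ≤ (n:ℝ) := by exact_mod_cast hn1
          nlinarith
        have hchern := aux_chernoff_exp hδ0 hδ1
        have hmul := mul_le_mul_of_nonneg_left hchern hK
        rw [hcard, hc, hs]
        nlinarith [hmul]

lemma aux_joint {n : ℕ} {Ω : Type} [MeasurableSpace Ω] (μ : Measure Ω) [IsProbabilityMeasure μ]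
    (θ : Fin n → Ω → ℝ) (hθmeas : ∀ u, Measurable (θ u))
    (hθindep : iIndepFun (fun u => θ u) μ)
    (hθlaw : ∀ u, Measure.map (θ u) μ = nu) :
    Measure.map (fun ω (i : Fin n) => θ i ω) μ = Measure.pi (fun _ => nu) := by
  have hF : Measurable (fun ω (i : Fin n) => θ i ω) :=
    measurable_pi_lambda _ hθmeas
  refine (Measure.pi_eq fun s hs => ?_).symm
  rw [Measure.map_apply hF (MeasurableSet.univ_pi hs)]
  have hpre : (fun ω (i : Fin n) => θ i ω) ⁻¹' Set.univ.pi s = ⋂ i ∈ Finset.univ, θ i ⁻¹' s i := by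
    ext ω; simp [Set.mem_univ_pi]
  rw [hpre, (iIndepFun_iff_measure_inter_preimage_eq_mul.mp hθindep) Finset.univ (fun i _ => hs i)]
  refine Finset.prod_congr rfl fun i _ => ?_
  rw [← Measure.map_apply (hθmeas i) (hs i), hθlaw i]

/-- Let f have finite spectrum of rank r and be L-Lipschitz in its first argument,
with d(x,y) = Σ_k λ_k^{2(t+1)}(q_k(x)−q_k(y))² and |λ_1| (index `k1`) the largest eigenvalue
modulus.  Let θ_1,…,θ_n be i.i.d. uniform on [0,1], δ ∈ (0,1), η' ∈ (0,|λ_1|^{2t}L²).  Then with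
probability at least 1 − n·exp(−δ²(n−1)√η'/(2|λ_1|^t L)), for every u,
(1/(n−1)) Σ_{a≠u} 1{d(θ_u,θ_a) ≤ η'} ≥ (1−δ)√η'/(|λ_1|^t L). -/
theorem statement17 {r n : ℕ} (f : ℝ → ℝ → ℝ) (lam : Fin r → ℝ) (q : Fin r → ℝ → ℝ)
    (hrange : ∀ x ∈ Set.Icc (0:ℝ) 1, ∀ y ∈ Set.Icc (0:ℝ) 1, f x y ∈ Set.Icc (0:ℝ) 1)
    (hsymm : ∀ x y, f x y = f y x)
    (hf : ∀ x y, f x y = ∑ k, lam k * q k x * q k y)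
    (hne : ∀ k, lam k ≠ 0)
    (hmeas : ∀ k, Measurable (q k))
    (hbdd : ∀ k, ∃ C : ℝ, ∀ y ∈ Set.Icc (0:ℝ) 1, |q k y| ≤ C)
    (hnorm : ∀ k, ∫ y in Set.Icc (0:ℝ) 1, (q k y) ^ 2 = 1)
    (horth : ∀ k l, k ≠ l → ∫ y in Set.Icc (0:ℝ) 1, q k y * q l y = 0)
    (k1 : Fin r) (hmax : ∀ k, |lam k| ≤ |lam k1|)
    (L : ℝ) (hL : 0 < L)
    (hLip : ∀ x ∈ Set.Icc (0:ℝ) 1, ∀ y ∈ Set.Icc (0:ℝ) 1, ∀ z ∈ Set.Icc (0:ℝ) 1,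
        |f x z - f y z| ≤ L * |x - y|)
    (t : ℕ) (d : ℝ → ℝ → ℝ)
    (hd : ∀ x y, d x y = ∑ k, (lam k) ^ (2 * (t + 1)) * (q k x - q k y) ^ 2)
    (Ω : Type) [MeasurableSpace Ω] (μ : Measure Ω) [IsProbabilityMeasure μ]
    (θ : Fin n → Ω → ℝ) (hθmeas : ∀ u, Measurable (θ u))
    (hθindep : iIndepFun (fun u => θ u) μ)
    (hθlaw : ∀ u, Measure.map (θ u) μ = volume.restrict (Set.Icc (0:ℝ) 1))
    (δ η' : ℝ) (hδ : δ ∈ Set.Ioo (0:ℝ) 1)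
    (hη' : η' ∈ Set.Ioo (0:ℝ) (|lam k1| ^ (2 * t) * L ^ 2)) :
    ENNReal.ofReal
        (1 - n * Real.exp (-(δ ^ 2 * ((n : ℝ) - 1) * Real.sqrt η') / (2 * |lam k1| ^ t * L)))
      ≤ μ {ω | ∀ u : Fin n,
          (1 - δ) * Real.sqrt η' / (|lam k1| ^ t * L)
            ≤ (1 / ((n : ℝ) - 1)) * ∑ a ∈ Finset.univ.erase u,
                (if d (θ u ω) (θ a ω) ≤ η' then (1 : ℝ) else 0)} := by
  classical
  obtain ⟨hδ0, hδ1⟩ := hδ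
  obtain ⟨hη0, hη1⟩ := hη'
  have habs1 : (0:ℝ) < |lam k1| := abs_pos.mpr (hne k1)
  set X : ℝ := |lam k1| ^ t * L with hX
  have hX0 : 0 < X := by positivity
  -- trivial case n = 0
  rcases Nat.eq_zero_or_pos n with hn0 | hnpos
  · subst hn0
    have hset : {ω : Ω | ∀ u : Fin 0,
        (1 - δ) * Real.sqrt η' / (|lam k1| ^ t * L)
          ≤ (1 / ((0:ℕ) - 1 : ℝ)) * ∑ a ∈ Finset.univ.erase u,
              (if d (θ u ω) (θ a ω) ≤ η' then (1 : ℝ) else 0)} = Set.univ :=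
      Set.eq_univ_of_forall (fun ω u => u.elim0)
    rw [hset, measure_univ]
    simp
  -- trivial case n = 1
  rcases eq_or_lt_of_le (show 1 ≤ n from hnpos) with hn1 | hn2
  · have hn1' : n = 1 := hn1.symm
    subst hn1'
    have : ((1:ℕ):ℝ) - 1 = 0 := by norm_num
    rw [show -(δ ^ 2 * (((1:ℕ):ℝ) - 1) * Real.sqrt η') / (2 * |lam k1| ^ t * L) = 0 by
      rw [this]; ring]
    rw [Real.exp_zero]
    norm_num
  -- main case : 2 ≤ n
  have hn2' : 2 ≤ n := hn2
  have hn1R : (0:ℝ) < (n:ℝ) - 1 := by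
    have : (2:ℝ) ≤ (n:ℝ) := by exact_mod_cast hn2'
    linarith
  set ε : ℝ := Real.sqrt η' / X with hε
  have hsq0 : 0 < Real.sqrt η' := Real.sqrt_pos.mpr hη0
  have hε0 : 0 < ε := by positivity
  have hsqle : Real.sqrt η' < X := by
    have h1 : |lam k1| ^ (2*t) * L^2 = X^2 := by
      rw [hX, mul_pow, ← pow_mul, mul_comm t 2]
    have h2 := Real.sqrt_lt_sqrt hη0.le (h1 ▸ hη1)
    rwa [Real.sqrt_sq hX0.le] at h2
  have hε1 : ε ≤ 1 := by rw [hε, div_le_one hX0]; linarith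
  have hεsq : |lam k1| ^ (2*t) * L^2 * ε^2 = η' := by
    rw [hε, div_pow, Real.sq_sqrt hη0.le]
    rw [show |lam k1| ^ (2*t) * L^2 = X^2 by rw [hX, mul_pow, ← pow_mul, mul_comm t 2]]
    field_simp
  -- geometry: closeness implies d-closeness
  have hgeom : ∀ x ∈ Set.Icc (0:ℝ) 1, ∀ y ∈ Set.Icc (0:ℝ) 1, |x - y| ≤ ε → d x y ≤ η' := by
    intro x hx y hy hxy
    have h1 := aux_geom f lam q hrange hf hmeas hbdd hnorm horth L hL hLip hx hy
    have h2 : ∀ k : Fin r, (lam k)^(2*(t+1)) * (q k x - q k y)^2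
        ≤ |lam k1|^(2*t) * ((lam k)^2 * (q k x - q k y)^2) := by
      intro k
      have e1 : (lam k)^(2*(t+1)) = (lam k)^(2*t) * (lam k)^2 := by
        rw [← pow_add]; ring_nf
      have e2 : (lam k)^(2*t) = |lam k|^(2*t) := (Even.pow_abs ⟨t, by ring⟩ (lam k)).symm
      have e3 : |lam k|^(2*t) ≤ |lam k1|^(2*t) := pow_le_pow_left₀ (abs_nonneg _) (hmax k) _
      rw [e1, e2, mul_assoc]
      exact mul_le_mul_of_nonneg_right e3 (by positivity)
    calc d x y = ∑ k, (lam k) ^ (2 * (t + 1)) * (q k x - q k y) ^ 2 := hd x y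
      _ ≤ ∑ k, |lam k1|^(2*t) * ((lam k)^2 * (q k x - q k y)^2) :=
          Finset.sum_le_sum fun k _ => h2 k
      _ = |lam k1|^(2*t) * ∑ k, (lam k)^2 * (q k x - q k y)^2 := by rw [Finset.mul_sum]
      _ ≤ |lam k1|^(2*t) * (L^2 * (x - y)^2) :=
          mul_le_mul_of_nonneg_left h1 (by positivity)
      _ ≤ |lam k1|^(2*t) * (L^2 * ε^2) := by
          have h3 : (x - y)^2 ≤ ε^2 := by
            rw [← sq_abs (x - y)]
            exact pow_le_pow_left₀ (abs_nonneg _) hxy 2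
          have h4 : (0:ℝ) ≤ |lam k1|^(2*t) := by positivity
          nlinarith
      _ = η' := by rw [← mul_assoc]; exact hεsq
  -- sets in the product space
  set P := (Measure.pi fun _ : Fin n => nu) with hP
  set S : Fin n → (Fin n → ℝ) → ℝ :=
    fun u x => ∑ a ∈ Finset.univ.erase u, if |x u - x a| ≤ ε then (1:ℝ) else 0 with hS
  set c : ℝ := (1-δ) * ((n:ℝ)-1) * ε with hc
  set T : Set (Fin n → ℝ) := {x | ∀ u : Fin n,
      (1 - δ) * Real.sqrt η' / (|lam k1| ^ t * L)
        ≤ (1 / ((n : ℝ) - 1)) * ∑ a ∈ Finset.univ.erase u,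
            (if d (x u) (x a) ≤ η' then (1 : ℝ) else 0)} with hT
  set T' : Set (Fin n → ℝ) := {x | ∀ u : Fin n, c ≤ S u x} with hT'
  set box : Set (Fin n → ℝ) := Set.univ.pi (fun _ => Set.Icc (0:ℝ) 1) with hbox
  -- measurability
  have hdm : ∀ u a : Fin n, Measurable (fun x : Fin n → ℝ => d (x u) (x a)) := by
    intro u a
    have : (fun x : Fin n → ℝ => d (x u) (x a))
        = fun x => ∑ k, (lam k) ^ (2 * (t + 1)) * (q k (x u) - q k (x a)) ^ 2 := by
      funext x; exact hd _ _
    rw [this]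
    apply Finset.measurable_sum
    intro k _
    exact ((((hmeas k).comp (measurable_pi_apply u)).sub
      ((hmeas k).comp (measurable_pi_apply a))).pow_const 2).const_mul _
  have hTm : MeasurableSet T := by
    rw [hT]
    rw [Set.setOf_forall]
    apply MeasurableSet.iInter
    intro u
    apply measurableSet_le measurable_const
    apply Measurable.const_mul
    apply Finset.measurable_sum
    intro a _
    exact Measurable.ite (measurableSet_le (hdm u a) measurable_const)
      measurable_const measurable_const
  have hboxm : MeasurableSet box :=
    MeasurableSet.univ_pi fun _ => measurableSet_Icc
  -- inclusion
  have hsub : T' ∩ box ⊆ T := by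
    rintro x ⟨hx1, hx2⟩ u
    have hxi : ∀ i, x i ∈ Set.Icc (0:ℝ) 1 := fun i => hx2 i (Set.mem_univ i)
    have hind : S u x ≤ ∑ a ∈ Finset.univ.erase u,
        (if d (x u) (x a) ≤ η' then (1 : ℝ) else 0) := by
      apply Finset.sum_le_sum
      intro a _
      by_cases h : |x u - x a| ≤ ε
      · have := hgeom (x u) (hxi u) (x a) (hxi a) h
        simp [h, this]
      · simp only [h, if_false]
        split_ifs <;> norm_num
    have h1 : c ≤ ∑ a ∈ Finset.univ.erase u,
        (if d (x u) (x a) ≤ η' then (1 : ℝ) else 0) := le_trans (hx1 u) hind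
    have h2 : (1 - δ) * Real.sqrt η' / (|lam k1| ^ t * L) = (1-δ) * ε := by
      rw [hε, hX, mul_div_assoc]
    rw [h2, one_div, inv_mul_eq_div, le_div_iff₀ hn1R]
    calc (1-δ) * ε * ((n:ℝ)-1) = c := by rw [hc]; ring
    _ ≤ _ := h1
  -- measure of box
  have hboxP : P box = 1 := by
    rw [hP, hbox, Measure.pi_pi]
    have : nu (Set.Icc (0:ℝ) 1) = 1 := by
      rw [nu, Measure.restrict_apply measurableSet_Icc, Set.inter_self, Real.volume_Icc]
      norm_num
    simp [this]
  have hboxc : P boxᶜ = 0 := by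
    rw [prob_compl_eq_one_sub hboxm, hboxP, tsub_self]
  -- complement inclusion
  have hcs : Tᶜ ⊆ (⋃ u : Fin n, {x | S u x < c}) ∪ boxᶜ := by
    intro x hx
    by_cases hb : x ∈ box
    · by_cases ht' : x ∈ T'
      · exact absurd (hsub ⟨ht', hb⟩) hx
      · left
        rw [Set.mem_iUnion]
        rw [hT', Set.mem_setOf_eq] at ht'
        push_neg at ht'
        obtain ⟨u, hu⟩ := ht'
        exact ⟨u, hu⟩
    · exact Or.inr hb
  -- Chernoff per u
  have hch : ∀ u : Fin n, P {x | S u x < c}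
      ≤ ENNReal.ofReal (Real.exp (-(δ ^ 2 * ((n : ℝ) - 1) * Real.sqrt η')
          / (2 * |lam k1| ^ t * L))) := by
    intro u
    have := aux_chernoff ε δ hε0 hε1 hδ0 hδ1 u
    have hexp : -(δ^2/2) * ((n:ℝ)-1) * ε
        = -(δ ^ 2 * ((n : ℝ) - 1) * Real.sqrt η') / (2 * |lam k1| ^ t * L) := by
      rw [hε, hX]
      field_simp
    rw [← hexp]
    exact this
  -- union bound
  set E : ℝ := Real.exp (-(δ ^ 2 * ((n : ℝ) - 1) * Real.sqrt η') / (2 * |lam k1| ^ t * L)) with hE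
  have hkey : P Tᶜ ≤ ENNReal.ofReal ((n:ℝ) * E) := by
    calc P Tᶜ ≤ P ((⋃ u : Fin n, {x | S u x < c}) ∪ boxᶜ) := measure_mono hcs
      _ ≤ P (⋃ u : Fin n, {x | S u x < c}) + P boxᶜ := measure_union_le _ _
      _ = P (⋃ u : Fin n, {x | S u x < c}) := by rw [hboxc, add_zero]
      _ ≤ ∑ u : Fin n, P {x | S u x < c} := measure_iUnion_fintype_le _ _
      _ ≤ ∑ _u : Fin n, ENNReal.ofReal E := Finset.sum_le_sum fun u _ => hch u
      _ = (n : ℝ≥0∞) * ENNReal.ofReal E := by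
          rw [Finset.sum_const, Finset.card_univ, Fintype.card_fin, nsmul_eq_mul]
      _ = ENNReal.ofReal ((n:ℝ) * E) := by
          rw [ENNReal.ofReal_mul (by positivity), ENNReal.ofReal_natCast]
  -- identify μ-set with preimage
  have hF : Measurable (fun ω (i : Fin n) => θ i ω) := measurable_pi_lambda _ hθmeas
  have hjoint := aux_joint μ θ hθmeas hθindep (fun u => hθlaw u)
  have hμT : μ {ω | ∀ u : Fin n,
      (1 - δ) * Real.sqrt η' / X
        ≤ (1 / ((n : ℝ) - 1)) * ∑ a ∈ Finset.univ.erase u,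
            (if d (θ u ω) (θ a ω) ≤ η' then (1 : ℝ) else 0)} = P T := by
    have hpre : {ω | ∀ u : Fin n,
        (1 - δ) * Real.sqrt η' / X
          ≤ (1 / ((n : ℝ) - 1)) * ∑ a ∈ Finset.univ.erase u,
              (if d (θ u ω) (θ a ω) ≤ η' then (1 : ℝ) else 0)}
        = (fun ω (i : Fin n) => θ i ω) ⁻¹' T := rfl
    rw [hpre, ← Measure.map_apply hF hTm, hjoint, hP]
  rw [hμT]
  -- final arithmetic in ℝ≥0∞
  have h1 : ENNReal.ofReal (1 - (n:ℝ) * E) = 1 - ENNReal.ofReal ((n:ℝ)*E) := by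
    rw [ENNReal.ofReal_sub 1 (by positivity), ENNReal.ofReal_one]
  calc ENNReal.ofReal (1 - (n:ℝ) * E) = 1 - ENNReal.ofReal ((n:ℝ)*E) := h1
    _ ≤ P T := by
        rw [tsub_le_iff_right]
        have h2 : P T + P Tᶜ = 1 := by
          rw [measure_add_measure_compl hTm, measure_univ]
        calc (1:ℝ≥0∞) = P T + P Tᶜ := h2.symm
          _ ≤ P T + ENNReal.ofReal ((n:ℝ)*E) := add_le_add_right hkey _
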